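/- Fix a composition μ of length n and 1 ≤ i ≤ n. Consider the sequence of rational functions a_m(q,t) = q^{μ_i} t^{n+m+1-β_{μ*0^m}(i)} in Q(q,t) (the eigenvalue of the Cherednik operator times t^{n+m}). Then with respect to the t-adic topology on Q(q,t): if μ_i ≠ 0 the sequence is eventually constant equal to q^{μ_i} t^{n+1-β_μ(i)}, and if μ_i = 0 the sequence converges to 0. -/
import Mathlib


open Finset

/-- `β_ν(i)` for a composition `ν` of length `N`. -/
def compBeta {N : ℕ} (ν : Fin N → ℕ) (i : Fin N) : ℕ :=
  (univ.filter (fun j : Fin N => j ≤ i ∧ ν j ≤ ν i)).card +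
  (univ.filter (fun j : Fin N => i < j ∧ ν j < ν i)).card

/-- The composition `μ * 0^m`. -/
def appendZeros {n : ℕ} (μ : Fin n → ℕ) (m : ℕ) : Fin (n + m) → ℕ :=
  fun j => if h : (j : ℕ) < n then μ ⟨j, h⟩ else 0

/-- The field `ℚ(q,t)`, realized as rational functions in `t` over `ℚ(q)`. -/
abbrev Qqt : Type := RatFunc (RatFunc ℚ)

/-- The variable `q` of `ℚ(q,t)`. -/
noncomputable def qq : Qqt := RatFunc.C RatFunc.X

/-- The variable `t` of `ℚ(q,t)`. -/
noncomputable def tt : Qqt := RatFunc.X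

/-- The `t`-adic valuation (order of vanishing at `t = 0`) of a rational function in `t`. -/
noncomputable def tOrd {K : Type*} [Field K] (f : RatFunc K) : ℤ :=
  (Polynomial.rootMultiplicity 0 f.num : ℤ) - (Polynomial.rootMultiplicity 0 f.denom : ℤ)

/-- Convergence of a sequence in the `t`-adic topology: the `t`-adic valuation of the
difference tends to infinity. -/
def TAdicConv {K : Type*} [Field K] (a : ℕ → RatFunc K) (L : RatFunc K) : Prop :=
  ∀ N : ℤ, ∃ M : ℕ, ∀ m ≥ M, a m = L ∨ N ≤ tOrd (a m - L)

lemma beta_append {n : ℕ} (μ : Fin n → ℕ) (i : Fin n) (m : ℕ) :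
    compBeta (appendZeros μ m) (Fin.castAdd m i) =
      compBeta μ i + (if μ i = 0 then 0 else m) := by
  classical
  unfold compBeta appendZeros
  simp only [Fin.coe_castAdd, dif_pos i.isLt, Fin.eta]
  rw [Finset.card_filter, Finset.card_filter, Finset.card_filter, Finset.card_filter,
    Fin.sum_univ_add, Fin.sum_univ_add]
  have h1 : ∀ j : Fin n, (Fin.castAdd m j ≤ Fin.castAdd m i) = (j ≤ i) := by
    intro j; simp only [Fin.le_def, Fin.coe_castAdd]
  have h2 : ∀ j : Fin n, (Fin.castAdd m i < Fin.castAdd m j) = (i < j) := by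
    intro j; simp only [Fin.lt_def, Fin.coe_castAdd]
  have h3 : ∀ j : Fin m, (Fin.natAdd n j ≤ Fin.castAdd m i) = False := by
    intro j; simp only [Fin.le_def, Fin.coe_natAdd, Fin.coe_castAdd, eq_iff_iff, iff_false]; omega
  have h4 : ∀ j : Fin m, (Fin.castAdd m i < Fin.natAdd n j) = True := by
    intro j; simp only [Fin.lt_def, Fin.coe_natAdd, Fin.coe_castAdd, eq_iff_iff, iff_true]; omega
  simp only [h1, h2, h3, h4, Fin.coe_castAdd, Fin.coe_natAdd, Fin.is_lt, dif_pos,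
    Fin.eta, false_and, if_false, true_and, Finset.sum_const_zero]
  have h6 : ∀ x : Fin m, (if h : n + (x:ℕ) < n then μ ⟨n + (x:ℕ), h⟩ else 0) = 0 := by
    intro x; rw [dif_neg]; omega
  simp only [h6]
  by_cases h : μ i = 0
  · simp [h]
  · simp [h, Nat.pos_of_ne_zero h, Finset.sum_const]
    omega

lemma compBeta_le {n : ℕ} (μ : Fin n → ℕ) (i : Fin n) : compBeta μ i ≤ n := by
  classical
  unfold compBeta
  have hdisj : Disjoint (univ.filter (fun j : Fin n => j ≤ i ∧ μ j ≤ μ i))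
      (univ.filter (fun j : Fin n => i < j ∧ μ j < μ i)) := by
    rw [Finset.disjoint_left]
    intro a ha hb
    simp only [Finset.mem_filter] at ha hb
    exact absurd hb.2.1 (not_lt.mpr ha.2.1)
  calc _ = ((univ.filter (fun j : Fin n => j ≤ i ∧ μ j ≤ μ i)) ∪
      (univ.filter (fun j : Fin n => i < j ∧ μ j < μ i))).card :=
        (Finset.card_union_of_disjoint hdisj).symm
    _ ≤ (univ : Finset (Fin n)).card := Finset.card_le_card (Finset.subset_univ _)
    _ = n := by simp

lemma tOrd_X_pow {K : Type*} [Field K] (e : ℕ) : tOrd ((RatFunc.X : RatFunc K) ^ e) = e := by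
  have hX : (RatFunc.X : RatFunc K) ^ e = algebraMap (Polynomial K) (RatFunc K)
      (Polynomial.X ^ e) := by
    rw [map_pow, RatFunc.algebraMap_X]
  rw [tOrd, hX, RatFunc.num_algebraMap, RatFunc.denom_algebraMap]
  have h1 : Polynomial.rootMultiplicity (0:K) (Polynomial.X ^ e) = e := by
    have := Polynomial.rootMultiplicity_X_sub_C_pow (0:K) e
    simpa using this
  have h2 : Polynomial.rootMultiplicity (0:K) (1 : Polynomial K) = 0 := by
    apply Polynomial.rootMultiplicity_eq_zero
    simp [Polynomial.IsRoot]
  rw [h1, h2]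
  simp

/-- For a composition `μ` of length `n` and `1 ≤ i ≤ n`, the sequence
`a_m = q^{μ_i} t^{n+m+1-β_{μ*0^m}(i)}`: if `μ_i ≠ 0` it is eventually constant equal to
`q^{μ_i} t^{n+1-β_μ(i)}`, and if `μ_i = 0` it converges `t`-adically to `0`. -/
theorem cherednik_eigenvalue_limit {n : ℕ} (μ : Fin n → ℕ) (i : Fin n) :
    (μ i ≠ 0 → ∃ M : ℕ, ∀ m ≥ M,
      qq ^ (μ i) * tt ^ (n + m + 1 - compBeta (appendZeros μ m) (Fin.castAdd m i)) =
        qq ^ (μ i) * tt ^ (n + 1 - compBeta μ i)) ∧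
    (μ i = 0 → TAdicConv
      (fun m => qq ^ (μ i) * tt ^ (n + m + 1 - compBeta (appendZeros μ m) (Fin.castAdd m i)))
      0) := by
  constructor
  · intro hμ
    refine ⟨0, fun m _ => ?_⟩
    rw [beta_append, if_neg hμ]
    have he : n + m + 1 - (compBeta μ i + m) = n + 1 - compBeta μ i := by omega
    rw [he]
  · intro hμ
    intro N
    refine ⟨N.toNat, fun m hm => Or.inr ?_⟩
    simp only [hμ, pow_zero, one_mul, sub_zero, beta_append, if_pos rfl, ite_true, Nat.add_zero]
    rw [tt, tOrd_X_pow]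
    have hb := compBeta_le μ i
    omega
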